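/- If (K,ρ) is a compact metric space, then the formula c(x,y,z) = (ρ(x,z) − ρ(x,y)) / max{ρ(x,y), ρ(x,z)} defines a closeness function for K on {(x,y,z) ∈ K³ : y ≠ z}. -/
import Mathlib


open MeasureTheory

noncomputable section

variable {K : Type*} [TopologicalSpace K] [MeasurableSpace K]

/-- The integral of a function against a signed measure. -/
def sInt (μ : SignedMeasure K) (f : K → ℝ) : ℝ :=
  ∫ x, f x ∂μ.toJordanDecomposition.posPart - ∫ x, f x ∂μ.toJordanDecomposition.negPart

/-- The total variation norm of a signed measure. -/
def mNorm (μ : SignedMeasure K) : ℝ := (μ.totalVariation Set.univ).toReal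

/-- `ν` is a compensation of `μ`: if `μ(K) > 0` then `0 ≤ ν ≤ μ⁺` and `ν(K) = μ(K)`;
if `μ(K) ≤ 0` then `ν = 0`. -/
def IsCompensation (μ ν : SignedMeasure K) : Prop :=
  if 0 < μ Set.univ then
    0 ≤ ν ∧ ν ≤ μ.toJordanDecomposition.posPart.toSignedMeasure ∧ ν Set.univ = μ Set.univ
  else ν = 0

/-- A family of signed measures indexed by a topological space is weak*-continuous. -/
def WStarContinuousFamily {T : Type*} [TopologicalSpace T] (F : T → SignedMeasure K) : Prop :=
  ∀ g : C(K, ℝ), Continuous fun t => sInt (F t) g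

/-- Membership in `W(K)`: a weak*-continuous map from `K` into the closed unit ball of the
space `M(K)` of regular Borel signed measures. -/
def MemW (F : K → SignedMeasure K) : Prop :=
  WStarContinuousFamily F ∧ ∀ t, (F t).totalVariation.Regular ∧ mNorm (F t) ≤ 1

/-- `K` admits local compensation: every element of `W(K)` admits a compensation in `W(K)`. -/
def AdmitsLocalCompensation (K : Type*) [TopologicalSpace K] [MeasurableSpace K] : Prop :=
  ∀ F : K → SignedMeasure K, MemW F →
    ∃ G : K → SignedMeasure K, MemW G ∧ ∀ t, IsCompensation (F t) (G t)

/-- The weak* topology on signed measures. -/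
instance wstarTopology : TopologicalSpace (SignedMeasure K) :=
  TopologicalSpace.induced (fun μ (g : C(K, ℝ)) => sInt μ g) inferInstance

/-- `M(K)`: the regular Borel signed measures on `K`, with the weak* topology. -/
def MK (K : Type*) [TopologicalSpace K] [MeasurableSpace K] : Type _ :=
  {μ : SignedMeasure K // μ.totalVariation.Regular}

instance : TopologicalSpace (MK K) := instTopologicalSpaceSubtype

/-- The closed unit ball `B_{M(K)}` of `M(K)`, with the weak* topology. -/
def BMK (K : Type*) [TopologicalSpace K] [MeasurableSpace K] : Type _ :=
  {μ : SignedMeasure K // μ.totalVariation.Regular ∧ mNorm μ ≤ 1}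

instance : TopologicalSpace (BMK K) := instTopologicalSpaceSubtype

/-- A compensation function on `K`: a weak*-to-weak*-continuous map `ξ : M(K) → M(K)` such
that `ξ μ` is a compensation of `μ` for every `μ ∈ M(K)`. -/
def IsCompensationFunction (ξ : MK K → MK K) : Prop :=
  Continuous ξ ∧ ∀ μ : MK K, IsCompensation μ.1 (ξ μ).1

/-- A `B_{M(K)}`-compensation function on `K`. -/
def IsBallCompensationFunction (ξ : BMK K → MK K) : Prop :=
  Continuous ξ ∧ ∀ μ : BMK K, IsCompensation μ.1 (ξ μ).1

/-- The numerical radius of an operator on a real Banach space. -/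
def NumericalRadius {X : Type*} [NormedAddCommGroup X] [NormedSpace ℝ X] (T : X →L[ℝ] X) : ℝ :=
  sSup {r | ∃ (x : X) (φ : X →L[ℝ] ℝ), ‖x‖ = 1 ∧ ‖φ‖ = 1 ∧ φ x = 1 ∧ r = |φ (T x)|}

/-- The Bishop-Phelps-Bollobás property for numerical radius, witnessed by a
given function `δ`. -/
def HasBPBNumericalRadiusWith (X : Type*) [NormedAddCommGroup X] [NormedSpace ℝ X]
    (δ : ℝ → ℝ) : Prop :=
  ∀ ε : ℝ, 0 < ε → ε < 1 →
    ∀ T : X →L[ℝ] X, NumericalRadius T = 1 →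
      ∀ (x : X) (φ : X →L[ℝ] ℝ), ‖x‖ = 1 → ‖φ‖ = 1 → φ x = 1 →
        1 - δ ε ≤ φ (T x) →
        ∃ (T₀ : X →L[ℝ] X) (x₀ : X) (φ₀ : X →L[ℝ] ℝ),
          NumericalRadius T₀ = 1 ∧ ‖x₀‖ = 1 ∧ ‖φ₀‖ = 1 ∧ φ₀ x₀ = 1 ∧
          φ₀ (T₀ x₀) = 1 ∧ NumericalRadius (T - T₀) ≤ ε ∧ ‖x - x₀‖ ≤ ε ∧ ‖φ - φ₀‖ ≤ ε

/-- The Bishop-Phelps-Bollobás property for numerical radius. -/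
def HasBPBNumericalRadius (X : Type*) [NormedAddCommGroup X] [NormedSpace ℝ X] : Prop :=
  ∃ δ : ℝ → ℝ, (∀ ε : ℝ, 0 < ε → ε < 1 → 0 < δ ε ∧ δ ε < 1) ∧ HasBPBNumericalRadiusWith X δ

/-- A closeness function for `K`: a continuous function `c` on
`{(x,y,z) ∈ K³ : y ≠ z}` with values in `[-1,1]` such that `c(x,y,z) = -c(x,z,y)`
whenever `y ≠ z` and `c(x,x,z) = 1` whenever `x ≠ z`. -/
def IsClosenessFunction (K : Type*) [TopologicalSpace K]
    (c : {p : K × K × K // p.2.1 ≠ p.2.2} → ℝ) : Prop :=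
  Continuous c ∧ (∀ p, c p ∈ Set.Icc (-1 : ℝ) 1) ∧
    (∀ (x y z : K) (h : y ≠ z), c ⟨(x, y, z), h⟩ = -c ⟨(x, z, y), h.symm⟩) ∧
    (∀ (x z : K) (h : x ≠ z), c ⟨(x, x, z), h⟩ = 1)

/-- On a compact metric space, the formula
`c(x,y,z) = (ρ(x,z) - ρ(x,y)) / max{ρ(x,y), ρ(x,z)}` defines a closeness function. -/
theorem stmt13 (K : Type*) [MetricSpace K] [CompactSpace K] :
    IsClosenessFunction K (fun p =>
      (dist p.1.1 p.1.2.2 - dist p.1.1 p.1.2.1) /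
        max (dist p.1.1 p.1.2.1) (dist p.1.1 p.1.2.2)) := by
  have hden : ∀ p : {p : K × K × K // p.2.1 ≠ p.2.2},
      0 < max (dist p.1.1 p.1.2.1) (dist p.1.1 p.1.2.2) := by
    rintro ⟨⟨x, y, z⟩, h⟩
    by_contra hc
    push_neg at hc
    have h1 : dist x y = 0 := le_antisymm ((le_max_left _ _).trans hc) dist_nonneg
    have h2 : dist x z = 0 := le_antisymm ((le_max_right _ _).trans hc) dist_nonneg
    exact h ((dist_eq_zero.mp h1).symm.trans (dist_eq_zero.mp h2))
  refine ⟨?_, ?_, ?_, ?_⟩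
  · apply Continuous.div
    · fun_prop
    · fun_prop
    · exact fun p => (hden p).ne'
  · intro p
    have hd := hden p
    rw [Set.mem_Icc, ← abs_le, abs_div, abs_of_pos hd, div_le_one hd]
    rw [abs_sub_le_iff]
    constructor
    · exact (sub_le_self _ dist_nonneg).trans (le_max_right _ _)
    · exact (sub_le_self _ dist_nonneg).trans (le_max_left _ _)
  · intro x y z h
    simp only []
    rw [show max (dist x z) (dist x y) = max (dist x y) (dist x z) from max_comm _ _]
    ring
  · intro x z h
    simp only [dist_self, sub_zero, max_eq_right dist_nonneg]
    exact div_self (dist_ne_zero.mpr h)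

end
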